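/- Let k ≥ 2 and let p₁, …, p_k be real numbers in [0,1] such that ∑_{l=1}^{k} (1 − p_l) ≤ 1, and for each j ∈ {2, …, k} assume the quantity D_j := (∑_{l=1}^{j−1} p_l) − (j − 2) is strictly positive. Fix j ∈ {1, …, k} and let X₁, …, X_j be independent {0,1}-valued random variables on a probability space with ℙ(X₁ = 1) = 1 − p₁ and ℙ(X_l = 1) = (1 − p_l)/D_l for each l ∈ {2, …, j}. Then ℙ(X₁ = 0 ∧ X₂ = 0 ∧ ⋯ ∧ X_{j−1} = 0 ∧ X_j = 1) = 1 − p_j. -/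

import Mathlib

open MeasureTheory ProbabilityTheory

/-- **Consistency of Orthogonal Monte-Carlo Dropout.**
Let `k ≥ 2` and `p 1, …, p k ∈ [0,1]` with `∑_{l=1}^k (1 - p l) ≤ 1`, and for `j ∈ {2,…,k}`
assume `D j := (∑_{l=1}^{j-1} p l) - (j - 2) > 0`. Fix `j ∈ {1,…,k}` and let `X 1, …, X j`
be independent `{0,1}`-valued random variables with `ℙ(X 1 = 1) = 1 - p 1` and
`ℙ(X l = 1) = (1 - p l) / D l` for `l ∈ {2,…,j}`. Then
`ℙ(X 1 = 0 ∧ ⋯ ∧ X (j-1) = 0 ∧ X j = 1) = 1 - p j`. -/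
theorem orth_mc_dropout_consistency
    {Ω : Type*} [MeasurableSpace Ω] (μ : Measure Ω) [IsProbabilityMeasure μ]
    (k : ℕ) (hk : 2 ≤ k) (p : ℕ → ℝ)
    (hp : ∀ l ∈ Finset.Icc 1 k, p l ∈ Set.Icc (0 : ℝ) 1)
    (hsum : ∑ l ∈ Finset.Icc 1 k, (1 - p l) ≤ 1)
    (D : ℕ → ℝ)
    (hD : ∀ l, D l = (∑ r ∈ Finset.Icc 1 (l - 1), p r) - ((l : ℝ) - 2))
    (hDpos : ∀ l ∈ Finset.Icc 2 k, 0 < D l)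
    (j : ℕ) (hj : j ∈ Finset.Icc 1 k)
    (X : ℕ → Ω → ℝ)
    (hXmeas : ∀ l ∈ Finset.Icc 1 j, Measurable (X l))
    (hXval : ∀ l ∈ Finset.Icc 1 j, ∀ ω, X l ω = 0 ∨ X l ω = 1)
    (hindep : iIndepFun
      (fun l : (Finset.Icc 1 j : Finset ℕ) => X l) μ)
    (hX1 : (μ {ω | X 1 ω = 1}).toReal = 1 - p 1)
    (hXl : ∀ l ∈ Finset.Icc 2 j, (μ {ω | X l ω = 1}).toReal = (1 - p l) / D l) :
    (μ {ω | (∀ l ∈ Finset.Icc 1 (j - 1), X l ω = 0) ∧ X j ω = 1}).toReal = 1 - p j := by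
  obtain ⟨hj1, hjk⟩ := Finset.mem_Icc.mp hj
  -- the target sets
  set T : ℕ → Set ℝ := fun l => if l = j then {1} else {0} with hT
  have hTmeas : ∀ l, MeasurableSet (T l) := by
    intro l; simp only [hT]; split <;> exact measurableSet_singleton _
  -- event as intersection
  have hset : {ω | (∀ l ∈ Finset.Icc 1 (j - 1), X l ω = 0) ∧ X j ω = 1}
      = ⋂ i ∈ (Finset.univ : Finset (Finset.Icc 1 j : Finset ℕ)), X i ⁻¹' T i := by
    ext ω
    simp only [Set.mem_setOf_eq, Finset.mem_univ, Set.iInter_true, Set.mem_iInter,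
      Set.mem_preimage, Subtype.forall, hT]
    constructor
    · rintro ⟨h0, h1⟩ l hl
      by_cases hlj : l = j
      · simp [hlj, h1]
      · have hl' := Finset.mem_Icc.mp hl
        have : l ∈ Finset.Icc 1 (j - 1) := by
          refine Finset.mem_Icc.mpr ⟨hl'.1, ?_⟩
          omega
        simp [hlj, h0 l this]
    · intro h
      constructor
      · intro l hl
        have hl' := Finset.mem_Icc.mp hl
        have hlj : l ≠ j := by omega
        have hlmem : l ∈ Finset.Icc 1 j := Finset.mem_Icc.mpr ⟨hl'.1, by omega⟩
        have := h l hlmem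
        simpa [hlj] using this
      · have := h j (Finset.mem_Icc.mpr ⟨hj1, le_refl j⟩)
        simpa using this
  have hmul := hindep.measure_inter_preimage_eq_mul (Finset.univ)
    (sets := fun i => T i) (fun i _ => hTmeas i)
  rw [hset, hmul]
  rw [ENNReal.toReal_prod]
  set q : ℕ → ℝ := fun l => (μ (X l ⁻¹' T l)).toReal with hq
  have hprodeq : ∏ i : (Finset.Icc 1 j : Finset ℕ), (μ (X i ⁻¹' T i)).toReal
      = ∏ l ∈ Finset.Icc 1 j, q l := by
    rw [← Finset.prod_coe_sort (Finset.Icc 1 j) q]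
  rw [hprodeq]
  -- value of q at j
  have hqj : q j = (μ {ω | X j ω = 1}).toReal := by
    have he : X j ⁻¹' T j = {ω | X j ω = 1} := by
      ext ω; simp [hT]
    simp only [hq, he]
  -- value of q at l < j : complement probability
  have hq0 : ∀ l ∈ Finset.Icc 1 (j - 1), q l = 1 - (μ {ω | X l ω = 1}).toReal := by
    intro l hl
    have hl' := Finset.mem_Icc.mp hl
    have hlj : l ≠ j := by omega
    have hlmem : l ∈ Finset.Icc 1 j := Finset.mem_Icc.mpr ⟨hl'.1, by omega⟩
    have hcompl : X l ⁻¹' T l = {ω | X l ω = 1}ᶜ := by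
      ext ω
      have := hXval l hlmem ω
      simp only [hT, if_neg hlj, Set.mem_preimage, Set.mem_singleton_iff,
        Set.mem_compl_iff, Set.mem_setOf_eq]
      constructor
      · intro h0; rw [h0]; norm_num
      · intro h1; tauto
    have hmeas1 : MeasurableSet {ω | X l ω = 1} := by
      have : {ω | X l ω = 1} = X l ⁻¹' {1} := by ext ω; simp
      rw [this]; exact (hXmeas l hlmem) (measurableSet_singleton _)
    simp only [hq, hcompl]
    rw [prob_compl_eq_one_sub hmeas1]
    rw [ENNReal.toReal_sub_of_le prob_le_one ENNReal.one_ne_top]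
    simp
  -- telescoping
  have key : ∀ m, 1 ≤ m → m ≤ j → ∏ l ∈ Finset.Icc 1 (m - 1), q l = D m := by
    intro m hm1
    induction m, hm1 using Nat.le_induction with
    | base =>
      intro _
      simp only [Nat.sub_self, Finset.Icc_eq_empty_of_lt Nat.zero_lt_one,
        Finset.prod_empty, hD 1]
      norm_num
    | succ m hm ih =>
      intro hmj
      have hmj' : m ≤ j := by omega
      have hprev := ih hmj'
      have hstep : (m + 1 - 1) = (m - 1) + 1 := by omega
      rw [hstep, Finset.prod_Icc_succ_top (by omega : 1 ≤ (m - 1) + 1)]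
      have hm1e : (m - 1) + 1 = m := by omega
      rw [hm1e, hprev]
      have hmmem : m ∈ Finset.Icc 1 (j - 1) := Finset.mem_Icc.mpr ⟨hm, by omega⟩
      have hDsucc : D (m + 1) = D m + p m - 1 := by
        rw [hD (m + 1), hD m]
        have h1 : (m + 1 : ℕ) - 1 = m := by omega
        rw [h1]
        have hsplit : ∑ r ∈ Finset.Icc 1 m, p r
            = (∑ r ∈ Finset.Icc 1 (m - 1), p r) + p m := by
          have hme : m = (m - 1) + 1 := by omega
          conv_lhs => rw [hme]
          rw [Finset.sum_Icc_succ_top (by omega : 1 ≤ (m - 1) + 1)]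
          rw [← hme]
        rw [hsplit]
        push_cast
        ring
      rcases Nat.eq_or_lt_of_le hm with h1 | h2
      · -- m = 1
        subst h1
        rw [hq0 1 hmmem, hX1, hDsucc, hD 1]
        norm_num
      · -- m ≥ 2
        have hm2 : m ∈ Finset.Icc 2 j := Finset.mem_Icc.mpr ⟨h2, hmj'⟩
        have hm2k : m ∈ Finset.Icc 2 k := Finset.mem_Icc.mpr ⟨h2, by omega⟩
        have hDm := hDpos m hm2k
        rw [hq0 m hmmem, hXl m hm2, hDsucc]
        field_simp
        ring
  -- finish
  rcases Nat.eq_or_lt_of_le hj1 with hj1e | hj2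
  · -- j = 1
    subst hj1e
    simp only [Finset.Icc_self, Finset.prod_singleton]
    rw [hqj, hX1]
  · -- j ≥ 2
    have hje : j = (j - 1) + 1 := by omega
    conv_lhs => rw [hje]
    rw [Finset.prod_Icc_succ_top (by omega : 1 ≤ (j - 1) + 1), ← hje]
    rw [key j hj1 (le_refl j), hqj,
      hXl j (Finset.mem_Icc.mpr ⟨hj2, le_refl j⟩)]
    have hDj := hDpos j (Finset.mem_Icc.mpr ⟨hj2, hjk⟩)
    field_simp
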